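/- Let K < ∞, L < ∞ and let f : [0,∞) → [0,∞) be L-Lipschitz with f(2t) − 2f(t) ≤ K and z·f(t) − f(zt) ≤ K for z ∈ {2,3} and all t ≥ 0. Then there exists a ∈ ℝ such that |f(t) − a·t| ≤ 2K for all t ≥ 0. -/

import Mathlib

open Filter Real Set MeasureTheory intervalIntegral

theorem stmt_10 (K L : ℝ) (f : ℝ → ℝ)
    (hnonneg : ∀ t : ℝ, 0 ≤ t → 0 ≤ f t)
    (hlip : ∀ s t : ℝ, 0 ≤ s → 0 ≤ t → |f s - f t| ≤ L * |s - t|)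
    (h1 : ∀ t : ℝ, 0 ≤ t → f (2 * t) - 2 * f t ≤ K)
    (h2 : ∀ t : ℝ, 0 ≤ t → 2 * f t - f (2 * t) ≤ K)
    (h3 : ∀ t : ℝ, 0 ≤ t → 3 * f t - f (3 * t) ≤ K) :
    ∃ a : ℝ, ∀ t : ℝ, 0 ≤ t → |f t - a * t| ≤ 2 * K := by
  have hf0 : 0 ≤ f 0 := hnonneg 0 le_rfl
  have hK0 : f 0 ≤ K := by have := h2 0 le_rfl; norm_num at this; linarith
  have hK : 0 ≤ K := le_trans hf0 hK0
  -- the approximating sequence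
  set u : ℝ → ℕ → ℝ := fun t n => f (2 ^ n * t) / 2 ^ n with hu
  have hdist : ∀ t : ℝ, 0 ≤ t → ∀ n : ℕ, dist (u t n) (u t (n + 1)) ≤ K / 2 / 2 ^ n := by
    intro t ht n
    have h2n : (0:ℝ) < 2 ^ n := by positivity
    have hs : (0:ℝ) ≤ 2 ^ n * t := by positivity
    have e1 := h1 (2 ^ n * t) hs
    have e2 := h2 (2 ^ n * t) hs
    have harg : (2:ℝ) ^ (n+1) * t = 2 * (2 ^ n * t) := by ring
    have heq : u t n - u t (n + 1) = (2 * f (2 ^ n * t) - f (2 * (2 ^ n * t))) / (2 * 2 ^ n) := by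
      simp only [hu, harg, pow_succ]
      field_simp
    rw [Real.dist_eq, heq, abs_div, abs_of_pos (by positivity : (0:ℝ) < 2 * 2 ^ n)]
    rw [div_le_div_iff₀ (by positivity) (by positivity)]
    have h : |2 * f (2 ^ n * t) - f (2 * (2 ^ n * t))| ≤ K := abs_le.2 ⟨by linarith, by linarith⟩
    nlinarith [h2n.le, mul_le_mul_of_nonneg_right h h2n.le]
  have hex : ∀ t : ℝ, ∃ y : ℝ, 0 ≤ t → Tendsto (u t) atTop (nhds y) := by
    intro t
    by_cases ht : 0 ≤ t
    · obtain ⟨y, hy⟩ := cauchySeq_tendsto_of_complete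
        (cauchySeq_of_le_geometric_two (hdist t ht))
      exact ⟨y, fun _ => hy⟩
    · exact ⟨0, fun h => absurd h ht⟩
  choose g hg using hex
  -- |f t - g t| ≤ K
  have hgf : ∀ t : ℝ, 0 ≤ t → |f t - g t| ≤ K := by
    intro t ht
    have := dist_le_of_le_geometric_two_of_tendsto₀ (hdist t ht) (hg t ht)
    have hu0 : u t 0 = f t := by simp [hu]
    rwa [hu0, Real.dist_eq] at this
  -- g (2t) = 2 g t
  have hg2 : ∀ t : ℝ, 0 ≤ t → g (2 * t) = 2 * g t := by
    intro t ht
    have h2t : (0:ℝ) ≤ 2 * t := by linarith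
    have t1 : Tendsto (fun n => 2 * u t (n + 1)) atTop (nhds (2 * g t)) :=
      (((hg t ht).comp (tendsto_add_atTop_nat 1))).const_mul 2
    have heq : ∀ n, 2 * u t (n + 1) = u (2 * t) n := by
      intro n
      simp only [hu, pow_succ]
      field_simp
    rw [funext heq] at t1
    exact tendsto_nhds_unique (hg (2 * t) h2t) t1
  -- 3 g t ≤ g (3 t)
  have hg3 : ∀ t : ℝ, 0 ≤ t → 3 * g t ≤ g (3 * t) := by
    intro t ht
    have h3t : (0:ℝ) ≤ 3 * t := by linarith
    have tl : Tendsto (fun n => 3 * u t n - u (3 * t) n) atTop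
        (nhds (3 * g t - g (3 * t))) := (((hg t ht).const_mul 3).sub (hg (3 * t) h3t))
    have tr : Tendsto (fun n : ℕ => K / 2 ^ n) atTop (nhds 0) := by
      simpa using tendsto_const_nhds.div_atTop
        (tendsto_pow_atTop_atTop_of_one_lt (by norm_num : (1:ℝ) < 2))
    have hle : ∀ n : ℕ, 3 * u t n - u (3 * t) n ≤ K / 2 ^ n := by
      intro n
      have h2n : (0:ℝ) < 2 ^ n := by positivity
      have hs : (0:ℝ) ≤ 2 ^ n * t := by positivity
      have := h3 (2 ^ n * t) hs
      have harg : (2:ℝ) ^ n * (3 * t) = 3 * (2 ^ n * t) := by ring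
      simp only [hu, harg]
      rw [show 3 * (f (2 ^ n * t) / 2 ^ n) - f (3 * (2 ^ n * t)) / 2 ^ n
            = (3 * f (2 ^ n * t) - f (3 * (2 ^ n * t))) / 2 ^ n by ring,
        div_le_div_iff₀ h2n h2n]
      nlinarith [h2n.le]
    have := le_of_tendsto_of_tendsto' tl tr hle
    linarith
  -- g nonneg, g Lipschitz
  have hgnn : ∀ t : ℝ, 0 ≤ t → 0 ≤ g t := by
    intro t ht
    refine ge_of_tendsto' (hg t ht) fun n => ?_
    have : (0:ℝ) ≤ 2 ^ n * t := by positivity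
    exact div_nonneg (hnonneg _ this) (by positivity)
  have hglip : ∀ s t : ℝ, 0 ≤ s → 0 ≤ t → |g s - g t| ≤ L * |s - t| := by
    intro s t hs ht
    have tl : Tendsto (fun n => |u s n - u t n|) atTop (nhds |g s - g t|) :=
      ((hg s hs).sub (hg t ht)).abs
    refine le_of_tendsto' tl fun n => ?_
    have h2n : (0:ℝ) < 2 ^ n := by positivity
    have := hlip (2 ^ n * s) (2 ^ n * t) (by positivity) (by positivity)
    have heq : |u s n - u t n| = |f (2 ^ n * s) - f (2 ^ n * t)| / 2 ^ n := by
      rw [hu]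
      rw [div_sub_div_same, abs_div, abs_of_pos h2n]
    rw [heq, div_le_iff₀ h2n]
    have harg : |2 ^ n * s - 2 ^ n * t| = 2 ^ n * |s - t| := by
      rw [← mul_sub, abs_mul, abs_of_pos h2n]
    rw [harg] at this
    nlinarith [this]
  have hL : 0 ≤ L := by
    have := hlip 0 1 le_rfl zero_le_one
    have h01 : |(0:ℝ) - 1| = 1 := by norm_num
    calc (0:ℝ) ≤ |f 0 - f 1| := abs_nonneg _
      _ ≤ L * |(0:ℝ) - 1| := this
      _ = L := by rw [h01]; ring
  have hgc : ContinuousOn g (Set.Ici 0) := by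
    refine LipschitzOnWith.continuousOn (K := L.toNNReal)
      (LipschitzOnWith.of_dist_le_mul fun s hs t ht => ?_)
    rw [Real.dist_eq, Real.dist_eq]
    calc |g s - g t| ≤ L * |s - t| := hglip s t hs ht
      _ = (L.toNNReal : ℝ) * |s - t| := by rw [Real.coe_toNNReal L hL]
  set p : ℝ := Real.log 2 with hpdef
  set q : ℝ := Real.log 3 with hqdef
  have hp : 0 < p := Real.log_pos one_lt_two
  have hq : 0 < q := Real.log_pos (by norm_num)
  set φ : ℝ → ℝ := fun x => g (Real.exp x) / Real.exp x with hφ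
  have hφc : Continuous φ := by
    have hc1 : Continuous fun x => g (Real.exp x) := by
      rw [← continuousOn_univ]
      exact hgc.comp Real.continuous_exp.continuousOn fun x _ => (Real.exp_pos x).le
    exact hc1.div Real.continuous_exp fun x => (Real.exp_pos x).ne'
  have hφp : Function.Periodic φ p := by
    intro x
    have hxp : Real.exp (x + p) = 2 * Real.exp x := by
      rw [Real.exp_add, hpdef, Real.exp_log two_pos]; ring
    simp only [hφ, hxp, hg2 (Real.exp x) (Real.exp_pos x).le]
    rw [mul_div_mul_left _ _ (two_ne_zero)]
  have hφq : ∀ x : ℝ, φ x ≤ φ (x + q) := by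
    intro x
    have hxq : Real.exp (x + q) = 3 * Real.exp x := by
      rw [Real.exp_add, hqdef, Real.exp_log (by norm_num : (0:ℝ) < 3)]; ring
    have h3 := hg3 (Real.exp x) (Real.exp_pos x).le
    simp only [hφ, hxq]
    rw [div_le_div_iff₀ (Real.exp_pos x) (by positivity)]
    nlinarith [Real.exp_pos x, h3]
  set F : ℝ → ℝ := fun x => φ (x + q) - φ x with hF
  have hFc : Continuous F := (hφc.comp (continuous_id.add continuous_const)).sub hφc
  have hFnn : ∀ x, 0 ≤ F x := fun x => sub_nonneg.2 (hφq x)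
  have hFp : Function.Periodic F p := by
    intro x
    simp only [hF]
    have e1 : x + p + q = x + q + p := by ring
    rw [e1, hφp (x + q), hφp x]
  have hint : ∀ t : ℝ, ∫ x in t..(t + p), F x = 0 := by
    intro t
    rw [hFp.intervalIntegral_add_eq t 0, zero_add]
    have hi1 : IntervalIntegrable (fun x => φ (x + q)) volume 0 p :=
      (hφc.comp (continuous_id.add continuous_const)).intervalIntegrable 0 p
    have hi2 : IntervalIntegrable φ volume 0 p := hφc.intervalIntegrable 0 p
    simp only [hF]
    rw [intervalIntegral.integral_sub hi1 hi2]
    have e2 : (∫ x in (0:ℝ)..p, φ (x + q)) = ∫ x in q..(q + p), φ x := by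
      rw [intervalIntegral.integral_comp_add_right]
      rw [zero_add, add_comm p q]
    rw [e2, hφp.intervalIntegral_add_eq q 0, zero_add, sub_self]
  have hF0 : ∀ x : ℝ, F x = 0 := by
    intro x0
    set t := x0 - p / 2 with htdef
    have hmem : x0 ∈ Set.Ioo t (t + p) := by
      constructor <;> [skip; skip] <;> simp [htdef] <;> linarith
    have hzero := hint t
    have hae : F =ᵐ[volume.restrict (Set.Ioc t (t + p))] 0 := by
      refine (intervalIntegral.integral_eq_zero_iff_of_le_of_nonneg_ae (by linarith)
        (Filter.Eventually.of_forall fun x => hFnn x) (hFc.intervalIntegrable _ _)).1 hzero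
    have hae2 : F =ᵐ[volume.restrict (Set.Ioo t (t + p))] 0 :=
      MeasureTheory.ae_restrict_of_ae_restrict_of_subset Set.Ioo_subset_Ioc_self hae
    exact MeasureTheory.Measure.eqOn_open_of_ae_eq hae2 isOpen_Ioo hFc.continuousOn
      continuous_const.continuousOn hmem
  have hφq' : ∀ x : ℝ, φ (x + q) = φ x := by
    intro x
    have := hF0 x
    simp only [hF] at this
    linarith
  set S : AddSubgroup ℝ := AddSubgroup.closure {p, q} with hS
  have hinv : ∀ s : ℝ, s ∈ S → ∀ x : ℝ, φ (x + s) = φ x := by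
    intro s hs
    induction hs using AddSubgroup.closure_induction with
    | mem y hy =>
      rcases hy with hy | hy
      · intro x; rw [hy]; exact hφp x
      · intro x; rw [Set.mem_singleton_iff.1 hy]; exact hφq' x
    | zero => intro x; simp
    | add y z _ _ hy hz => intro x; rw [← add_assoc, hz (x + y), hy x]
    | neg y _ hy => intro x; have := hy (x + -y); simpa using this.symm
  have hdense : Dense (S : Set ℝ) := by
    rcases S.dense_or_cyclic with h | ⟨a, ha⟩
    · exact h
    · exfalso
      have hpS : p ∈ S := AddSubgroup.subset_closure (by simp)
      have hqS : q ∈ S := AddSubgroup.subset_closure (by simp)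
      rw [ha, AddSubgroup.mem_closure_singleton] at hpS hqS
      obtain ⟨m, hm⟩ := hpS
      obtain ⟨n, hn⟩ := hqS
      have hm' : (m : ℝ) * a = p := by rw [← hm]; simp [zsmul_eq_mul]
      have hn' : (n : ℝ) * a = q := by rw [← hn]; simp [zsmul_eq_mul]
      have key : (n : ℝ) * p = (m : ℝ) * q := by
        rw [← hm', ← hn']; ring
      have hm0 : m ≠ 0 := by rintro rfl; simp at hm'; linarith
      have hn0 : n ≠ 0 := by rintro rfl; simp at hn'; linarith
      have habs : (n.natAbs : ℝ) * p = (m.natAbs : ℝ) * q := by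
        have h1 : |(n : ℝ) * p| = |(m : ℝ) * q| := by rw [key]
        rw [abs_mul, abs_mul, abs_of_pos hp, abs_of_pos hq] at h1
        rw [Nat.cast_natAbs, Nat.cast_natAbs]
        push_cast
        exact h1
      have hlogeq : Real.log ((2:ℝ) ^ n.natAbs) = Real.log ((3:ℝ) ^ m.natAbs) := by
        rw [Real.log_pow, Real.log_pow, ← hpdef, ← hqdef]
        exact_mod_cast habs
      have hpoweq : (2:ℝ) ^ n.natAbs = (3:ℝ) ^ m.natAbs := by
        have := congrArg Real.exp hlogeq
        rwa [Real.exp_log (by positivity), Real.exp_log (by positivity)] at this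
      have hnat : (2:ℕ) ^ n.natAbs = 3 ^ m.natAbs := by exact_mod_cast hpoweq
      have heven : 2 ∣ (2:ℕ) ^ n.natAbs := dvd_pow_self 2 (Int.natAbs_ne_zero.2 hn0)
      rw [hnat] at heven
      have hodd : Odd ((3:ℕ) ^ m.natAbs) := Odd.pow ⟨1, by norm_num⟩
      rw [Nat.odd_iff] at hodd
      omega
  have hconst : ∀ x : ℝ, φ x = φ 0 := by
    have heq : φ = fun _ => φ 0 := by
      refine Continuous.ext_on hdense hφc continuous_const fun s hs => ?_
      have := hinv s hs 0
      simpa using this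
    intro x; rw [heq]
  refine ⟨φ 0, fun t ht => ?_⟩
  rcases eq_or_lt_of_le ht with rfl | htpos
  · rw [mul_zero, sub_zero, abs_of_nonneg hf0]; linarith
  · have hgt : g t = φ 0 * t := by
      have hlg : Real.exp (Real.log t) = t := Real.exp_log htpos
      have h5 : φ (Real.log t) = g t / t := by simp only [hφ, hlg]
      rw [hconst (Real.log t)] at h5
      field_simp at h5
      linarith [h5]
    calc |f t - φ 0 * t| = |f t - g t| := by rw [hgt]
      _ ≤ K := hgf t ht
      _ ≤ 2 * K := by linarith
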